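/- Let H₀, H₁, K₀, K₁ be complex Hilbert spaces, X ∈ B(H₁,H₀), U₀₁ ∈ B(H₁,K₀), U₁₀ ∈ B(H₀,K₁), and suppose the block operator U := [[U₀₁∘X*, U₀₁],[U₁₀, −U₁₀∘X]] : H₀⊕H₁ → K₀⊕K₁ is unitary. Then: U₀₁(1+X*X)U₀₁* = 1 on K₀; U₁₀(1+XX*)U₁₀* = 1 on K₁; X∘U₀₁*∘U₀₁ = U₁₀*∘U₁₀∘X; X∘U₀₁*∘U₀₁∘X* + U₁₀*∘U₁₀ = 1 on H₀; X*∘U₁₀*∘U₁₀∘X + U₀₁*∘U₀₁ = 1 on H₁; consequently U₀₁*∘U₀₁ = (1+X*X)⁻¹, U₁₀*∘U₁₀ = (1+XX*)⁻¹, and U₀₁ and U₁₀ are invertible. -/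

import Mathlib

open ContinuousLinearMap
set_option maxHeartbeats 1000000

noncomputable def blockOp {H₀ H₁ K₀ K₁ : Type*}
    [NormedAddCommGroup H₀] [InnerProductSpace ℂ H₀]
    [NormedAddCommGroup H₁] [InnerProductSpace ℂ H₁]
    [NormedAddCommGroup K₀] [InnerProductSpace ℂ K₀]
    [NormedAddCommGroup K₁] [InnerProductSpace ℂ K₁]
    (A : H₀ →L[ℂ] K₀) (B : H₁ →L[ℂ] K₀) (C : H₀ →L[ℂ] K₁) (D : H₁ →L[ℂ] K₁) :
    WithLp 2 (H₀ × H₁) →L[ℂ] WithLp 2 (K₀ × K₁) :=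
  (((WithLp.prodContinuousLinearEquiv 2 ℂ K₀ K₁).symm : (K₀ × K₁) →L[ℂ] WithLp 2 (K₀ × K₁)) ∘L
    ((A.coprod B).prod (C.coprod D))) ∘L
    ((WithLp.prodContinuousLinearEquiv 2 ℂ H₀ H₁ : WithLp 2 (H₀ × H₁) →L[ℂ] (H₀ × H₁)))

section Aux

variable {H₀ H₁ K₀ K₁ : Type*}
    [NormedAddCommGroup H₀] [InnerProductSpace ℂ H₀]
    [NormedAddCommGroup H₁] [InnerProductSpace ℂ H₁]
    [NormedAddCommGroup K₀] [InnerProductSpace ℂ K₀]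
    [NormedAddCommGroup K₁] [InnerProductSpace ℂ K₁]

@[simp] lemma blockOp_fst (A : H₀ →L[ℂ] K₀) (B : H₁ →L[ℂ] K₀) (C : H₀ →L[ℂ] K₁) (D : H₁ →L[ℂ] K₁)
    (x : WithLp 2 (H₀ × H₁)) : (blockOp A B C D x).fst = A x.fst + B x.snd := rfl

@[simp] lemma blockOp_snd (A : H₀ →L[ℂ] K₀) (B : H₁ →L[ℂ] K₀) (C : H₀ →L[ℂ] K₁) (D : H₁ →L[ℂ] K₁)
    (x : WithLp 2 (H₀ × H₁)) : (blockOp A B C D x).snd = C x.fst + D x.snd := rfl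

lemma blockOp_adjoint [CompleteSpace H₀] [CompleteSpace H₁] [CompleteSpace K₀] [CompleteSpace K₁]
    (A : H₀ →L[ℂ] K₀) (B : H₁ →L[ℂ] K₀) (C : H₀ →L[ℂ] K₁) (D : H₁ →L[ℂ] K₁) :
    adjoint (blockOp A B C D) = blockOp (adjoint A) (adjoint C) (adjoint B) (adjoint D) := by
  symm
  rw [eq_adjoint_iff]
  intro x y
  simp [WithLp.prod_inner_apply, inner_add_left, inner_add_right, adjoint_inner_left]
  ring

end Aux

/-- consequences of `U = [[U₀₁X*, U₀₁],[U₁₀, -U₁₀X]]` being unitary. -/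
theorem stmt7 {H₀ H₁ K₀ K₁ : Type*}
    [NormedAddCommGroup H₀] [InnerProductSpace ℂ H₀] [CompleteSpace H₀]
    [NormedAddCommGroup H₁] [InnerProductSpace ℂ H₁] [CompleteSpace H₁]
    [NormedAddCommGroup K₀] [InnerProductSpace ℂ K₀] [CompleteSpace K₀]
    [NormedAddCommGroup K₁] [InnerProductSpace ℂ K₁] [CompleteSpace K₁]
    (X : H₁ →L[ℂ] H₀) (U₀₁ : H₁ →L[ℂ] K₀) (U₁₀ : H₀ →L[ℂ] K₁)
    (U : WithLp 2 (H₀ × H₁) →L[ℂ] WithLp 2 (K₀ × K₁))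
    (hU : U = blockOp (U₀₁ ∘L adjoint X) U₀₁ U₁₀ (-(U₁₀ ∘L X)))
    (hU1 : adjoint U ∘L U = ContinuousLinearMap.id ℂ _)
    (hU2 : U ∘L adjoint U = ContinuousLinearMap.id ℂ _) :
    U₀₁ ∘L (1 + adjoint X ∘L X) ∘L adjoint U₀₁ = 1 ∧
    U₁₀ ∘L (1 + X ∘L adjoint X) ∘L adjoint U₁₀ = 1 ∧
    X ∘L (adjoint U₀₁ ∘L U₀₁) = (adjoint U₁₀ ∘L U₁₀) ∘L X ∧
    X ∘L (adjoint U₀₁ ∘L U₀₁) ∘L adjoint X + adjoint U₁₀ ∘L U₁₀ = 1 ∧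
    adjoint X ∘L (adjoint U₁₀ ∘L U₁₀) ∘L X + adjoint U₀₁ ∘L U₀₁ = 1 ∧
    (adjoint U₀₁ ∘L U₀₁) ∘L (1 + adjoint X ∘L X) = 1 ∧
    (1 + adjoint X ∘L X) ∘L (adjoint U₀₁ ∘L U₀₁) = 1 ∧
    (adjoint U₁₀ ∘L U₁₀) ∘L (1 + X ∘L adjoint X) = 1 ∧
    (1 + X ∘L adjoint X) ∘L (adjoint U₁₀ ∘L U₁₀) = 1 ∧
    (∃ V : K₀ →L[ℂ] H₁, U₀₁ ∘L V = 1 ∧ V ∘L U₀₁ = 1) ∧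
    (∃ W : K₁ →L[ℂ] H₀, U₁₀ ∘L W = 1 ∧ W ∘L U₁₀ = 1) := by
  rw [hU, blockOp_adjoint] at hU1 hU2
  -- pointwise consequences
  have p4 : ∀ h₀ : H₀, X (adjoint U₀₁ (U₀₁ (adjoint X h₀))) + adjoint U₁₀ (U₁₀ h₀) = h₀ := by
    intro h₀
    have h := congrArg WithLp.fst
      (ContinuousLinearMap.ext_iff.mp hU1 ((WithLp.equiv 2 (H₀ × H₁)).symm (h₀, 0)))
    simpa using h
  have p21 : ∀ h₀ : H₀,
      adjoint U₀₁ (U₀₁ (adjoint X h₀)) = adjoint X (adjoint U₁₀ (U₁₀ h₀)) := by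
    intro h₀
    have h := congrArg WithLp.snd
      (ContinuousLinearMap.ext_iff.mp hU1 ((WithLp.equiv 2 (H₀ × H₁)).symm (h₀, 0)))
    simp at h
    linear_combination (norm := abel) h
  have p3 : ∀ h₁ : H₁, X (adjoint U₀₁ (U₀₁ h₁)) = adjoint U₁₀ (U₁₀ (X h₁)) := by
    intro h₁
    have h := congrArg WithLp.fst
      (ContinuousLinearMap.ext_iff.mp hU1 ((WithLp.equiv 2 (H₀ × H₁)).symm (0, h₁)))
    simp at h
    linear_combination (norm := abel) h
  have p5 : ∀ h₁ : H₁,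
      adjoint X (adjoint U₁₀ (U₁₀ (X h₁))) + adjoint U₀₁ (U₀₁ h₁) = h₁ := by
    intro h₁
    have h := congrArg WithLp.snd
      (ContinuousLinearMap.ext_iff.mp hU1 ((WithLp.equiv 2 (H₀ × H₁)).symm (0, h₁)))
    simp at h
    linear_combination (norm := abel) h
  have p1 : ∀ k₀ : K₀,
      U₀₁ (adjoint X (X (adjoint U₀₁ k₀))) + U₀₁ (adjoint U₀₁ k₀) = k₀ := by
    intro k₀
    have h := congrArg WithLp.fst
      (ContinuousLinearMap.ext_iff.mp hU2 ((WithLp.equiv 2 (K₀ × K₁)).symm (k₀, 0)))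
    simp at h
    linear_combination (norm := abel) h
  have p2 : ∀ k₁ : K₁,
      U₁₀ (adjoint U₁₀ k₁) + U₁₀ (X (adjoint X (adjoint U₁₀ k₁))) = k₁ := by
    intro k₁
    have h := congrArg WithLp.snd
      (ContinuousLinearMap.ext_iff.mp hU2 ((WithLp.equiv 2 (K₀ × K₁)).symm (0, k₁)))
    simp at h
    linear_combination (norm := abel) h
  refine ⟨?_, ?_, ?_, ?_, ?_, ?_, ?_, ?_, ?_, ?_, ?_⟩
  · ext k₀
    have := p1 k₀
    simp only [comp_apply, add_apply, one_apply_eq_self, map_add]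
    linear_combination (norm := abel) this
  · ext k₁
    have := p2 k₁
    simp only [comp_apply, add_apply, one_apply_eq_self, map_add]
    linear_combination (norm := abel) this
  · ext h₁; simpa using p3 h₁
  · ext h₀; simpa using p4 h₀
  · ext h₁; simpa using p5 h₁
  · ext h₁
    simp only [comp_apply, add_apply, one_apply_eq_self, map_add]
    rw [p21 (X h₁)]
    linear_combination (norm := abel) p5 h₁
  · ext h₁
    simp only [comp_apply, add_apply, one_apply_eq_self, map_add]
    rw [p3 h₁]
    linear_combination (norm := abel) p5 h₁
  · ext h₀
    simp only [comp_apply, add_apply, one_apply_eq_self, map_add]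
    rw [← p3 (adjoint X h₀)]
    linear_combination (norm := abel) p4 h₀
  · ext h₀
    simp only [comp_apply, add_apply, one_apply_eq_self, map_add]
    rw [← p21 h₀]
    linear_combination (norm := abel) p4 h₀
  · refine ⟨(1 + adjoint X ∘L X) ∘L adjoint U₀₁, ?_, ?_⟩
    · ext k₀
      simp only [comp_apply, add_apply, one_apply_eq_self, map_add]
      linear_combination (norm := abel) p1 k₀
    · ext h₁
      simp only [comp_apply, add_apply, one_apply_eq_self, map_add]
      rw [p3 h₁]
      linear_combination (norm := abel) p5 h₁
  · refine ⟨(1 + X ∘L adjoint X) ∘L adjoint U₁₀, ?_, ?_⟩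
    · ext k₁
      simp only [comp_apply, add_apply, one_apply_eq_self, map_add]
      linear_combination (norm := abel) p2 k₁
    · ext h₀
      simp only [comp_apply, add_apply, one_apply_eq_self, map_add]
      rw [← p21 h₀]
      linear_combination (norm := abel) p4 h₀
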